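/- If P_i is a (K_i, F, Z, S_i) PDA with integer entries in [0,S_i) for 0 ≤ i < m, then the horizontal concatenation (P_0, P_1 + S_0, P_2 + S_0 + S_1, ..., P_{m−1} + Σ_{i<m−1} S_i), where P + s means adding s to every integer entry and leaving stars unchanged, is a (Σ K_i, F, Z, Σ S_i) PDA. -/

import Mathlib

/-- A `(K, F, Z, S)` placement delivery array: an `F × K` array over `[0,S) ∪ {*}`
(star encoded as `none`) such that each column contains exactly `Z` stars, every
integer in `[0,S)` appears, and any two equal integer entries lie in distinct rows
and distinct columns with stars at the two crossing positions. -/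
def IsPDA (K F Z S : ℕ) (P : Fin F → Fin K → Option ℕ) : Prop :=
  (∀ j, (Finset.univ.filter fun i => P i j = none).card = Z) ∧
  (∀ i j s, P i j = some s → s < S) ∧
  (∀ s, s < S → ∃ i j, P i j = some s) ∧
  (∀ i₁ j₁ i₂ j₂ s, P i₁ j₁ = some s → P i₂ j₂ = some s → (i₁ ≠ i₂ ∨ j₁ ≠ j₂) →
    i₁ ≠ i₂ ∧ j₁ ≠ j₂ ∧ P i₁ j₂ = none ∧ P i₂ j₁ = none)

/-- `minS K F Z` is the minimum `S` for which a `(K, F, Z, S)` PDA exists. -/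
noncomputable def minS (K F Z : ℕ) : ℕ :=
  sInf {S | ∃ P : Fin F → Fin K → Option ℕ, IsPDA K F Z S P}

/-- A `(K, F, Z, S)` placement delivery array with rows indexed by `ι` and columns
indexed by `κ` (star encoded as `none`): `ι` has cardinality `F`, `κ` has
cardinality `K`, each column contains exactly `Z` stars, every integer in `[0,S)`
appears, and any two equal integer entries lie in distinct rows and distinct
columns with stars at the two crossing positions. -/
def IsPDAOn {ι κ : Type*} [Fintype ι] [Fintype κ] (K F Z S : ℕ)
    (P : ι → κ → Option ℕ) : Prop :=
  Fintype.card ι = F ∧ Fintype.card κ = K ∧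
  (∀ j, (Finset.univ.filter fun i => P i j = none).card = Z) ∧
  (∀ i j s, P i j = some s → s < S) ∧
  (∀ s, s < S → ∃ i j, P i j = some s) ∧
  (∀ i₁ j₁ i₂ j₂ s, P i₁ j₁ = some s → P i₂ j₂ = some s → (i₁ ≠ i₂ ∨ j₁ ≠ j₂) →
    i₁ ≠ i₂ ∧ j₁ ≠ j₂ ∧ P i₁ j₂ = none ∧ P i₂ j₁ = none)

section aux
variable {m : ℕ} (S : Fin m → ℕ)

lemma off_add_le {i j : Fin m} (hij : i < j) :
    (∑ i' ∈ Finset.Iio i, S i') + S i ≤ ∑ i' ∈ Finset.Iio j, S i' := by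
  have hsub : insert i (Finset.Iio i) ⊆ Finset.Iio j := by
    intro k hk
    simp only [Finset.mem_insert, Finset.mem_Iio] at hk ⊢
    rcases hk with rfl | hk
    · exact hij
    · exact hk.trans hij
  calc (∑ i' ∈ Finset.Iio i, S i') + S i
      = ∑ i' ∈ insert i (Finset.Iio i), S i' := by
        rw [Finset.sum_insert (by simp)]; ring
    _ ≤ ∑ i' ∈ Finset.Iio j, S i' := Finset.sum_le_sum_of_subset hsub

lemma off_add_le_total (i : Fin m) :
    (∑ i' ∈ Finset.Iio i, S i') + S i ≤ ∑ i', S i' := by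
  calc (∑ i' ∈ Finset.Iio i, S i') + S i
      = ∑ i' ∈ insert i (Finset.Iio i), S i' := by
        rw [Finset.sum_insert (by simp)]; ring
    _ ≤ ∑ i', S i' := Finset.sum_le_sum_of_subset (Finset.subset_univ _)

lemma off_unique {i j : Fin m} {t u : ℕ} (ht : t < S i) (hu : u < S j)
    (h : t + (∑ i' ∈ Finset.Iio i, S i') = u + ∑ i' ∈ Finset.Iio j, S i') : i = j := by
  rcases lt_trichotomy i j with hij | hij | hij
  · have := off_add_le S hij; omega
  · exact hij
  · have := off_add_le S hij; omega

lemma off_exists (hm : 0 < m) {s : ℕ} (hs : s < ∑ i', S i') :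
    ∃ i : Fin m, (∑ i' ∈ Finset.Iio i, S i') ≤ s ∧
      s < (∑ i' ∈ Finset.Iio i, S i') + S i := by
  set T : Finset (Fin m) := Finset.univ.filter fun i => (∑ i' ∈ Finset.Iio i, S i') ≤ s with hT
  have h0 : (⟨0, hm⟩ : Fin m) ∈ T := by
    simp only [hT, Finset.mem_filter, Finset.mem_univ, true_and]
    have : Finset.Iio (⟨0, hm⟩ : Fin m) = ∅ := by
      apply Finset.eq_empty_iff_forall_notMem.2
      intro k hk
      simp only [Finset.mem_Iio, Fin.lt_def] at hk
      omega
    simp [this]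
  have hTne : T.Nonempty := ⟨_, h0⟩
  refine ⟨T.max' hTne, ?_, ?_⟩
  · have := T.max'_mem hTne
    simpa [hT] using this
  · by_contra hcon
    push_neg at hcon
    set i := T.max' hTne
    by_cases hlast : i.val + 1 < m
    · set j : Fin m := ⟨i.val + 1, hlast⟩
      have hIio : Finset.Iio j = insert i (Finset.Iio i) := by
        ext k
        simp only [Finset.mem_Iio, Finset.mem_insert, Fin.lt_def, Fin.ext_iff, j]
        omega
      have hj : j ∈ T := by
        simp only [hT, Finset.mem_filter, Finset.mem_univ, true_and]
        rw [hIio, Finset.sum_insert (by simp)]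
        omega
      have := T.le_max' j hj
      simp only [Fin.le_def, j] at this
      omega
    · -- i is the last index: univ = insert i (Iio i)
      have huniv : (Finset.univ : Finset (Fin m)) ⊆ insert i (Finset.Iio i) := by
        intro k _
        simp only [Finset.mem_insert, Finset.mem_Iio, Fin.lt_def]
        have hk := k.isLt
        have hi := i.isLt
        rcases lt_or_eq_of_le (show k.val ≤ i.val by omega) with h | h
        · exact Or.inr h
        · exact Or.inl (Fin.ext h)
      have : (∑ i', S i') ≤ (∑ i' ∈ Finset.Iio i, S i') + S i := by
        calc (∑ i', S i') ≤ ∑ i' ∈ insert i (Finset.Iio i), S i' :=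
              Finset.sum_le_sum_of_subset huniv
          _ = (∑ i' ∈ Finset.Iio i, S i') + S i := by
              rw [Finset.sum_insert (by simp)]; ring
      omega

end aux

/-- horizontally concatenating (K_i, F, Z, S_i) PDAs, shifting the
integer entries of the i-th block by S_0 + ⋯ + S_{i−1}, yields a
(ΣK_i, F, Z, ΣS_i) PDA. -/
theorem stmt13 (m F Z : ℕ) (hm : 2 ≤ m) (K S : Fin m → ℕ)
    (P : ∀ i, Fin F → Fin (K i) → Option ℕ)
    (hP : ∀ i, IsPDA (K i) F Z (S i) (P i)) :
    IsPDAOn (∑ i, K i) F Z (∑ i, S i)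
      (fun (r : Fin F) (c : Σ i : Fin m, Fin (K i)) =>
        (P c.1 r c.2).map (· + ∑ i' ∈ Finset.Iio c.1, S i')) := by
  refine ⟨Fintype.card_fin F, by simp, ?_, ?_, ?_, ?_⟩
  · rintro ⟨i, c⟩
    have := (hP i).1 c
    simp only [Option.map_eq_none_iff]
    exact this
  · rintro r ⟨i, c⟩ s h
    simp only [Option.map_eq_some_iff] at h
    obtain ⟨t, ht, rfl⟩ := h
    have h1 := (hP i).2.1 r c t ht
    have := off_add_le_total S i
    omega
  · intro s hs
    obtain ⟨i, h1, h2⟩ := off_exists S (by omega) hs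
    obtain ⟨r, c, hrc⟩ := (hP i).2.2.1 (s - ∑ i' ∈ Finset.Iio i, S i') (by omega)
    exact ⟨r, ⟨i, c⟩, by simp [hrc]; omega⟩
  · rintro r₁ ⟨i₁, c₁⟩ r₂ ⟨i₂, c₂⟩ s h₁ h₂ hne
    simp only [Option.map_eq_some_iff] at h₁ h₂
    obtain ⟨t, ht, hts⟩ := h₁
    obtain ⟨u, hu, hus⟩ := h₂
    have hi : i₁ = i₂ :=
      off_unique S ((hP i₁).2.1 _ _ _ ht) ((hP i₂).2.1 _ _ _ hu) (by omega)
    subst hi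
    have htu : t = u := by
      have := off_add_le_total S i₁; omega
    subst htu
    have hne' : r₁ ≠ r₂ ∨ c₁ ≠ c₂ := by
      rcases hne with h | h
      · exact Or.inl h
      · refine Or.inr fun hc => h ?_
        subst hc; rfl
    obtain ⟨ha, hb, hc, hd⟩ := (hP i₁).2.2.2 r₁ c₁ r₂ c₂ t ht hu hne'
    refine ⟨ha, fun hcc => hb ?_, by simp [hc], by simp [hd]⟩
    simpa using hcc
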